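/- Let A be a unital associative algebra over ℂ, let ℏ, α ∈ ℂ, and let a, b, c ∈ A satisfy the sl(2)_ℏ relations [a,b]=ℏb, [a,c]=-ℏc, [b,c]=2ℏa, together with the Casimir condition -a² - (bc+cb)/2 = α·1. Let L = [[a,b],[c,-a]], L₁ = L ⊗ 1₂ (Kronecker product), let P be the 4×4 flip matrix (P(eᵢ⊗eⱼ) = eⱼ⊗eᵢ), and set L₍₂₎ = (1/2)(1+P)·L₁·(1+P). Then L₍₂₎³ - 4ℏ·L₍₂₎² + 4(α+ℏ²)·L₍₂₎ - 4ℏα·(1+P) = 0 in the algebra of 4×4 matrices over A. -/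

import Mathlib

open Kronecker

set_option maxHeartbeats 4000000 in
/-- The identity `L₍₂₎³ - 4ℏL₍₂₎² + 4(α+ℏ²)L₍₂₎ - 4ℏα(1+P) = 0` for the
symmetrized extension `L₍₂₎ = ½(1+P)L₁(1+P)` of the `sl(2)_ℏ` matrix `L`,
where the Casimir takes the value `α`. -/
theorem sl2_extension_identity {A : Type*} [Ring A] [Algebra ℂ A] (ℏ α : ℂ) (a b c : A)
    (hab : a * b - b * a = ℏ • b)
    (hac : a * c - c * a = (-ℏ) • c)
    (hbc : b * c - c * b = (2 * ℏ) • a)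
    (hcas : -a ^ 2 - (1 / 2 : ℂ) • (b * c + c * b) = algebraMap ℂ A α) :
    let L : Matrix (Fin 2) (Fin 2) A := !![a, b; c, -a]
    let L₁ : Matrix (Fin 2 × Fin 2) (Fin 2 × Fin 2) A := L ⊗ₖ (1 : Matrix (Fin 2) (Fin 2) A)
    let P : Matrix (Fin 2 × Fin 2) (Fin 2 × Fin 2) A :=
      fun p q => if p.1 = q.2 ∧ p.2 = q.1 then 1 else 0
    let L₂ : Matrix (Fin 2 × Fin 2) (Fin 2 × Fin 2) A := (1 / 2 : ℂ) • ((1 + P) * L₁ * (1 + P))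
    L₂ ^ 3 - (4 * ℏ) • L₂ ^ 2 + (4 * (α + ℏ ^ 2)) • L₂ - (4 * ℏ * α) • (1 + P) = 0 := by
  intro L L₁ P L₂
  have hba : b * a = a * b - ℏ • b := by
    linear_combination (norm := module) -hab
  have hba' : ∀ x : A, b * (a * x) = a * (b * x) - ℏ • (b * x) := fun x => by
    rw [← mul_assoc, hba, sub_mul, mul_assoc, smul_mul_assoc]
  have hca : c * a = a * c + ℏ • c := by
    linear_combination (norm := module) -hac
  have hca' : ∀ x : A, c * (a * x) = a * (c * x) + ℏ • (c * x) := fun x => by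
    rw [← mul_assoc, hca, add_mul, mul_assoc, smul_mul_assoc]
  have hcb : c * b = b * c - (2 * ℏ) • a := by
    linear_combination (norm := module) -hbc
  have hcb' : ∀ x : A, c * (b * x) = b * (c * x) - (2 * ℏ) • (a * x) := fun x => by
    rw [← mul_assoc, hcb, sub_mul, mul_assoc, smul_mul_assoc]
  have h1 : -(a * a) - (1 / 2 : ℂ) • (b * c + c * b) = α • (1 : A) := by
    rw [← Algebra.algebraMap_eq_smul_one, ← hcas, pow_two]
  have hbc2 : b * c = ℏ • a - a * a - α • (1 : A) := by
    linear_combination (norm := module) (1 / 2 : ℂ) • hbc - h1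
  have hbc2' : ∀ x : A, b * (c * x) = ℏ • (a * x) - a * (a * x) - α • x := fun x => by
    rw [← mul_assoc, hbc2, sub_mul, sub_mul, mul_assoc, smul_mul_assoc, smul_mul_assoc, one_mul]
  have hL2 : L₂ = Matrix.of fun p q =>
      ![![![![(2:ℂ)•a, b], ![b, 0]], ![![c,(0:A)],![0,b]]],
        ![![![c,0],![0,b]], ![![0,c],![c,(-2:ℂ)•a]]]] p.1 p.2 q.1 q.2 := by
    ext ⟨i,j⟩ ⟨k,l⟩
    simp only [L₂, L₁, Matrix.smul_apply, Matrix.mul_apply, Matrix.add_apply]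
    fin_cases i <;> fin_cases j <;> fin_cases k <;> fin_cases l <;>
      simp [L₂, L₁, L, P, Matrix.mul_apply, Fintype.sum_prod_type, Fin.sum_univ_two,
        Matrix.one_apply, Matrix.add_apply, Pi.add_apply, Matrix.smul_apply, Prod.mk.injEq, Prod.ext_iff,
        Prod.fst_zero, Prod.snd_zero, Prod.fst_one, Prod.snd_one, one_add_one_eq_two,
        two_mul, mul_two, smul_add, smul_sub, smul_smul] <;> module
  rw [hL2]
  ext ⟨i,j⟩ ⟨k,l⟩
  simp only [pow_succ, pow_zero, one_mul]
  simp only [Matrix.sub_apply, Matrix.smul_apply, Matrix.add_apply]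
  fin_cases i <;> fin_cases j <;> fin_cases k <;> fin_cases l <;>
    simp [P, Matrix.mul_apply, Fintype.sum_prod_type, Fin.sum_univ_two,
      Matrix.one_apply, Matrix.add_apply, Pi.add_apply, Matrix.smul_apply, Matrix.sub_apply, Prod.mk.injEq,
      Prod.ext_iff, Prod.fst_zero, Prod.snd_zero, Prod.fst_one, Prod.snd_one,
      mul_add, add_mul, mul_sub, sub_mul, mul_assoc, smul_mul_assoc, mul_smul_comm,
      smul_smul, smul_add, smul_sub, hba, hba', hca, hca', hcb, hcb', hbc2, hbc2'] <;>
    module
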